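/- Let h : E → ℝ be convex and continuous, let σ > 0 and τ = 1/σ², and define the Moreau envelope h_{σ²}(x) = inf_{v ∈ E} { (1/2)‖v − x‖² + σ²·h(v) } and the smoothed objective f_{σ²} = g + τ·h_{σ²}. Then f_{σ²} is convex and differentiable on E, its gradient satisfies ∇f_{σ²}(x) = ∇g(x) + τ·(x − prox_{σ²h}(x)) for all x ∈ E, and ∇f_{σ²} is Lipschitz continuous with constant L + 2τ. -/

import Mathlib

open Set

variable {E : Type*} [NormedAddCommGroup E] [InnerProductSpace ℝ E] [CompleteSpace E]

local notation "⟪" x ", " y "⟫" => @inner ℝ _ _ x y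

/-- Variational inequality for the prox minimizer. -/
lemma prox_varineq (h : E → ℝ) (hh : ConvexOn ℝ univ h) (c : ℝ) (hc : 0 ≤ c)
    (x p : E) (hmin : ∀ v, (1/2) * ‖p - x‖ ^ 2 + c * h p ≤ (1/2) * ‖v - x‖ ^ 2 + c * h v)
    (v : E) : ⟪x - p, v - p⟫ ≤ c * (h v - h p) := by
  have key : ∀ t : ℝ, 0 < t → t ≤ 1 →
      ⟪x - p, v - p⟫ ≤ (t/2) * ‖v - p‖ ^ 2 + c * (h v - h p) := by
    intro t ht ht1
    have hmem := hmin (p + t • (v - p))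
    have hconv := hh.2 (mem_univ p) (mem_univ v) (by linarith : (0:ℝ) ≤ 1 - t)
      (le_of_lt ht) (by ring)
    simp only [smul_eq_mul] at hconv
    have hcomb : p + t • (v - p) = (1 - t) • p + t • v := by
      rw [smul_sub]; module
    rw [hcomb] at hmem
    have hnorm : ‖(1 - t) • p + t • v - x‖ ^ 2
        = ‖p - x‖ ^ 2 + 2 * t * ⟪p - x, v - p⟫ + t ^ 2 * ‖v - p‖ ^ 2 := by
      have : (1 - t) • p + t • v - x = (p - x) + t • (v - p) := by module
      rw [this, norm_add_sq_real, real_inner_smul_right, norm_smul, mul_pow]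
      simp [abs_of_pos ht]
      ring
    have hinner : ⟪x - p, v - p⟫ = - ⟪p - x, v - p⟫ := by
      rw [← inner_neg_left]; congr 1; abel
    have hch : c * h ((1 - t) • p + t • v) ≤ c * ((1 - t) * h p + t * h v) :=
      mul_le_mul_of_nonneg_left hconv hc
    rw [hinner]
    nlinarith [hmem, hnorm, hch]
  refine le_of_forall_pos_le_add fun ε hε => ?_
  have hdpos : (0:ℝ) < ‖v - p‖ ^ 2 + 1 := by positivity
  set t : ℝ := min 1 (2 * ε / (‖v - p‖ ^ 2 + 1)) with htdef
  have ht : 0 < t := lt_min one_pos (by positivity)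
  have ht1 : t ≤ 1 := min_le_left _ _
  have h2 : t ≤ 2 * ε / (‖v - p‖ ^ 2 + 1) := min_le_right _ _
  have := key t ht ht1
  have hb : (t/2) * ‖v - p‖ ^ 2 ≤ ε := by
    have h3 : t * (‖v - p‖ ^ 2 + 1) ≤ 2 * ε := by
      calc t * (‖v - p‖ ^ 2 + 1) ≤ (2 * ε / (‖v - p‖ ^ 2 + 1)) * (‖v - p‖ ^ 2 + 1) :=
            mul_le_mul_of_nonneg_right h2 (le_of_lt hdpos)
        _ = 2 * ε := by field_simp
    nlinarith
  linarith

/-- Nonexpansiveness of prox. -/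
lemma prox_nonexpansive (h : E → ℝ) (hh : ConvexOn ℝ univ h) (c : ℝ) (hc : 0 ≤ c)
    (prox : E → E)
    (hmin : ∀ x v, (1/2) * ‖prox x - x‖ ^ 2 + c * h (prox x) ≤ (1/2) * ‖v - x‖ ^ 2 + c * h v)
    (x y : E) : ‖prox x - prox y‖ ≤ ‖x - y‖ := by
  set p := prox x
  set q := prox y
  have h1 := prox_varineq h hh c hc x p (hmin x) q
  have h2 := prox_varineq h hh c hc y q (hmin y) p
  have hsum : ⟪x - p, q - p⟫ + ⟪y - q, p - q⟫ ≤ 0 := by linarith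
  have hflip : ⟪y - q, p - q⟫ = ⟪q - y, q - p⟫ := by
    rw [← inner_neg_neg]; congr 1 <;> abel
  have hcombine : ⟪(x - y) - (p - q), q - p⟫ ≤ 0 := by
    rw [hflip] at hsum
    calc ⟪(x - y) - (p - q), q - p⟫ = ⟪x - p, q - p⟫ + ⟪q - y, q - p⟫ := by
          rw [← inner_add_left]; congr 1; abel
      _ ≤ 0 := hsum
  have hsq : ‖p - q‖ ^ 2 ≤ ⟪x - y, p - q⟫ := by
    have : ⟪(x - y) - (p - q), q - p⟫ = -⟪x - y, p - q⟫ + ‖p - q‖ ^ 2 := by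
      rw [inner_sub_left]
      have e1 : ⟪x - y, q - p⟫ = -⟪x - y, p - q⟫ := by
        rw [← inner_neg_right]; congr 1; abel
      have e2 : ⟪p - q, q - p⟫ = -(‖p - q‖ ^ 2) := by
        rw [show q - p = -(p - q) by abel, inner_neg_right, real_inner_self_eq_norm_sq]
      rw [e1, e2]; ring
    linarith [hcombine, this.symm.le, this.le]
  have hcs : ⟪x - y, p - q⟫ ≤ ‖x - y‖ * ‖p - q‖ := real_inner_le_norm _ _
  nlinarith [norm_nonneg (p - q), norm_nonneg (x - y)]

/-- Gradient of the Moreau envelope. -/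
lemma moreau_gradient (h : E → ℝ) (hh : ConvexOn ℝ univ h) (c : ℝ) (hc : 0 ≤ c)
    (prox : E → E)
    (hmin : ∀ x v, (1/2) * ‖prox x - x‖ ^ 2 + c * h (prox x) ≤ (1/2) * ‖v - x‖ ^ 2 + c * h v)
    (x : E) :
    HasGradientAt (fun y => (1/2) * ‖prox y - y‖ ^ 2 + c * h (prox y)) (x - prox x) x := by
  set M : E → ℝ := fun y => (1/2) * ‖prox y - y‖ ^ 2 + c * h (prox y) with hM
  have hbound : ∀ y : E, |M y - M x - ⟪x - prox x, y - x⟫| ≤ (5/2) * ‖y - x‖ ^ 2 := by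
    intro y
    set p := prox x
    set q := prox y
    have hupper : M y - M x ≤ ⟪x - p, y - x⟫ + (1/2) * ‖y - x‖ ^ 2 := by
      have h1 : M y ≤ (1/2) * ‖p - y‖ ^ 2 + c * h p := hmin y p
      have h2 : ‖p - y‖ ^ 2 = ‖p - x‖ ^ 2 - 2 * ⟪p - x, y - x⟫ + ‖y - x‖ ^ 2 := by
        have e : p - y = (p - x) - (y - x) := by abel
        rw [e, norm_sub_sq_real]
      have h3 : ⟪x - p, y - x⟫ = -⟪p - x, y - x⟫ := by
        rw [← inner_neg_left]; congr 1; abel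
      simp only [hM] at h1 ⊢
      nlinarith [h1, h2]
    have hlower : M x - M y ≤ ⟪y - q, x - y⟫ + (1/2) * ‖x - y‖ ^ 2 := by
      have h1 : M x ≤ (1/2) * ‖q - x‖ ^ 2 + c * h q := hmin x q
      have h2 : ‖q - x‖ ^ 2 = ‖q - y‖ ^ 2 - 2 * ⟪q - y, x - y⟫ + ‖x - y‖ ^ 2 := by
        have e : q - x = (q - y) - (x - y) := by abel
        rw [e, norm_sub_sq_real]
      have h3 : ⟪y - q, x - y⟫ = -⟪q - y, x - y⟫ := by
        rw [← inner_neg_left]; congr 1; abel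
      simp only [hM] at h1 ⊢
      nlinarith [h1, h2]
    have hne : ‖p - q‖ ≤ ‖x - y‖ := prox_nonexpansive h hh c hc prox hmin x y
    -- M y - M x ≥ ⟪x - p, y - x⟫ - (5/2)‖y-x‖²
    have hrest : ⟪x - p, y - x⟫ - ⟪y - q, y - x⟫ ≤ 2 * ‖y - x‖ ^ 2 := by
      have e : ⟪x - p, y - x⟫ - ⟪y - q, y - x⟫ = ⟪(x - y) - (p - q), y - x⟫ := by
        rw [← inner_sub_left]; congr 1; abel
      rw [e]
      calc ⟪(x - y) - (p - q), y - x⟫ ≤ ‖(x - y) - (p - q)‖ * ‖y - x‖ := real_inner_le_norm _ _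
        _ ≤ (‖x - y‖ + ‖p - q‖) * ‖y - x‖ := by
            apply mul_le_mul_of_nonneg_right (norm_sub_le _ _) (norm_nonneg _)
        _ ≤ 2 * ‖y - x‖ ^ 2 := by
            rw [show ‖x - y‖ = ‖y - x‖ by rw [norm_sub_rev]] at hne ⊢
            nlinarith [norm_nonneg (y - x)]
    have hinner2 : ⟪y - q, x - y⟫ = -⟪y - q, y - x⟫ := by
      rw [← inner_neg_right]; congr 1; abel
    have hxy : ‖x - y‖ = ‖y - x‖ := norm_sub_rev _ _
    rw [abs_le]
    constructor
    · rw [hinner2, hxy] at hlower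
      linarith [sq_nonneg ‖y - x‖]
    · linarith [sq_nonneg ‖y - x‖]
  rw [hasGradientAt_iff_isLittleO]
  rw [Asymptotics.isLittleO_iff]
  intro ε hε
  have : ∀ᶠ y in nhds x, ‖y - x‖ ≤ 2 * ε / 5 := by
    have : Metric.ball x (2 * ε / 5 + 1) ∈ nhds x := Metric.ball_mem_nhds x (by positivity)
    filter_upwards [Metric.closedBall_mem_nhds x (show (0:ℝ) < 2*ε/5 by positivity)] with y hy
    simpa [dist_eq_norm] using hy
  filter_upwards [this] with y hy
  calc ‖M y - M x - ⟪x - prox x, y - x⟫‖ ≤ (5/2) * ‖y - x‖ ^ 2 := by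
        rw [Real.norm_eq_abs]; exact hbound y
    _ ≤ ε * ‖y - x‖ := by nlinarith [norm_nonneg (y - x)]
    _ = ε * ‖(fun y => y - x) y‖ := rfl

/-- Convexity of the Moreau envelope (in its evaluated form). -/
lemma moreau_convex (h : E → ℝ) (hh : ConvexOn ℝ univ h) (c : ℝ) (hc : 0 ≤ c)
    (prox : E → E)
    (hmin : ∀ x v, (1/2) * ‖prox x - x‖ ^ 2 + c * h (prox x) ≤ (1/2) * ‖v - x‖ ^ 2 + c * h v) :
    ConvexOn ℝ univ (fun y => (1/2) * ‖prox y - y‖ ^ 2 + c * h (prox y)) := by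
  refine ⟨convex_univ, fun x₀ _ x₁ _ a b ha hb hab => ?_⟩
  set p₀ := prox x₀
  set p₁ := prox x₁
  set z := a • x₀ + b • x₁
  have h1 : (1/2) * ‖prox z - z‖ ^ 2 + c * h (prox z)
      ≤ (1/2) * ‖(a • p₀ + b • p₁) - z‖ ^ 2 + c * h (a • p₀ + b • p₁) :=
    hmin z (a • p₀ + b • p₁)
  have hnorm : ‖(a • p₀ + b • p₁) - z‖ ^ 2 ≤ a * ‖p₀ - x₀‖ ^ 2 + b * ‖p₁ - x₁‖ ^ 2 := by
    have e : (a • p₀ + b • p₁) - z = a • (p₀ - x₀) + b • (p₁ - x₁) := by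
      simp only [z, smul_sub]; abel
    have htri : ‖(a • p₀ + b • p₁) - z‖ ≤ a * ‖p₀ - x₀‖ + b * ‖p₁ - x₁‖ := by
      rw [e]
      calc ‖a • (p₀ - x₀) + b • (p₁ - x₁)‖ ≤ ‖a • (p₀ - x₀)‖ + ‖b • (p₁ - x₁)‖ :=
            norm_add_le _ _
        _ = a * ‖p₀ - x₀‖ + b * ‖p₁ - x₁‖ := by
            rw [norm_smul, norm_smul, Real.norm_eq_abs, Real.norm_eq_abs,
              abs_of_nonneg ha, abs_of_nonneg hb]
    nlinarith [norm_nonneg ((a • p₀ + b • p₁) - z), norm_nonneg (p₀ - x₀),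
      norm_nonneg (p₁ - x₁), sq_nonneg (‖p₀ - x₀‖ - ‖p₁ - x₁‖), mul_nonneg ha hb]
  have hhc : h (a • p₀ + b • p₁) ≤ a * h p₀ + b * h p₁ := by
    have := hh.2 (mem_univ p₀) (mem_univ p₁) ha hb hab
    simpa using this
  have hch : c * h (a • p₀ + b • p₁) ≤ c * (a * h p₀ + b * h p₁) :=
    mul_le_mul_of_nonneg_left hhc hc
  simp only [smul_eq_mul]
  nlinarith [h1, hnorm, hch]

/-- The smoothed objective `f_{σ²} = g + τ·h_{σ²}` (with `τ = 1/σ²` and `h_{σ²}`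
the Moreau envelope of `h`) is convex and differentiable with gradient
`∇f_{σ²}(x) = ∇g(x) + τ(x − prox_{σ²h}(x))`, which is `(L+2τ)`-Lipschitz. -/
theorem smoothed_objective_gradient {n : ℕ}
    (g h : EuclideanSpace ℝ (Fin n) → ℝ)
    (g' prox : EuclideanSpace ℝ (Fin n) → EuclideanSpace ℝ (Fin n))
    (L σ τ : ℝ)
    (hL : 0 < L)
    (hgconv : ConvexOn ℝ Set.univ g)
    (hgrad : ∀ x, HasGradientAt g (g' x) x)
    (hgLip : ∀ x y, ‖g' x - g' y‖ ≤ L * ‖x - y‖)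
    (hhconv : ConvexOn ℝ Set.univ h) (hhcont : Continuous h)
    (hσ : 0 < σ) (hτ : τ = 1 / σ ^ 2)
    (hprox : ∀ x, IsMinOn (fun v => (1 / 2) * ‖v - x‖ ^ 2 + σ ^ 2 * h v)
      Set.univ (prox x)) :
    ConvexOn ℝ Set.univ
      (fun x : EuclideanSpace ℝ (Fin n) =>
        g x + τ * ⨅ v : EuclideanSpace ℝ (Fin n),
          ((1 / 2) * ‖v - x‖ ^ 2 + σ ^ 2 * h v)) ∧
    (∀ x : EuclideanSpace ℝ (Fin n),
      HasGradientAt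
        (fun x : EuclideanSpace ℝ (Fin n) =>
          g x + τ * ⨅ v : EuclideanSpace ℝ (Fin n),
            ((1 / 2) * ‖v - x‖ ^ 2 + σ ^ 2 * h v))
        (g' x + τ • (x - prox x)) x) ∧
    ∀ x y : EuclideanSpace ℝ (Fin n),
      ‖(g' x + τ • (x - prox x)) - (g' y + τ • (y - prox y))‖
        ≤ (L + 2 * τ) * ‖x - y‖ := by
  have hc : (0:ℝ) ≤ σ ^ 2 := sq_nonneg σ
  have hτpos : 0 < τ := by rw [hτ]; positivity
  have hmin : ∀ x v, (1/2) * ‖prox x - x‖ ^ 2 + σ ^ 2 * h (prox x)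
      ≤ (1/2) * ‖v - x‖ ^ 2 + σ ^ 2 * h v := fun x v =>
    isMinOn_iff.mp (hprox x) v (Set.mem_univ v)
  set M : EuclideanSpace ℝ (Fin n) → ℝ :=
    fun y => (1/2) * ‖prox y - y‖ ^ 2 + σ ^ 2 * h (prox y) with hMdef
  have hMval : ∀ x : EuclideanSpace ℝ (Fin n),
      (⨅ v : EuclideanSpace ℝ (Fin n), ((1 / 2) * ‖v - x‖ ^ 2 + σ ^ 2 * h v)) = M x := by
    intro x
    refine le_antisymm ?_ (le_ciInf fun v => hmin x v)
    exact ciInf_le ⟨M x, by rintro _ ⟨v, rfl⟩; exact hmin x v⟩ (prox x)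
  have hfun : (fun x : EuclideanSpace ℝ (Fin n) =>
      g x + τ * ⨅ v : EuclideanSpace ℝ (Fin n), ((1 / 2) * ‖v - x‖ ^ 2 + σ ^ 2 * h v))
      = fun x => g x + τ * M x := funext fun x => by rw [hMval]
  rw [hfun]
  refine ⟨?_, ?_, ?_⟩
  · -- convexity
    have hMconv := moreau_convex h hhconv (σ ^ 2) hc prox hmin
    have := hgconv.add (hMconv.smul hτpos.le)
    have e : (fun x => g x + τ * M x)
        = (g + fun x => τ • (1 / 2 * ‖prox x - x‖ ^ 2 + σ ^ 2 * h (prox x))) := by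
      ext x; simp [hMdef, smul_eq_mul]
    rw [e]; exact this
  · -- gradient
    intro x
    have h1 := (hgrad x).hasFDerivAt
    have h2 := (moreau_gradient h hhconv (σ ^ 2) hc prox hmin x).hasFDerivAt
    have h3 := h1.add (h2.const_mul τ)
    rw [hasGradientAt_iff_hasFDerivAt]
    rw [map_add, map_smul]
    exact h3
  · -- Lipschitz
    intro x y
    have hne := prox_nonexpansive h hhconv (σ ^ 2) hc prox hmin x y
    have e : (g' x + τ • (x - prox x)) - (g' y + τ • (y - prox y))
        = (g' x - g' y) + τ • ((x - y) - (prox x - prox y)) := by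
      rw [smul_sub]; module
    rw [e]
    calc ‖(g' x - g' y) + τ • ((x - y) - (prox x - prox y))‖
        ≤ ‖g' x - g' y‖ + ‖τ • ((x - y) - (prox x - prox y))‖ := norm_add_le _ _
      _ ≤ L * ‖x - y‖ + τ * (‖x - y‖ + ‖prox x - prox y‖) := by
          gcongr
          · exact hgLip x y
          · rw [norm_smul, Real.norm_eq_abs, abs_of_pos hτpos]
            exact mul_le_mul_of_nonneg_left (norm_sub_le _ _) hτpos.le
      _ ≤ (L + 2 * τ) * ‖x - y‖ := by nlinarith [norm_nonneg (x - y)]
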